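/- arXiv:1612.03024 — 2 statements merged into one kernel-verified Lean document; each statement's English description precedes it below -/
import Mathlib

section
/- Let n ≥ 1 be a natural number and d₂ > 0. The function ε₂ ↦ (n/(2d₂) + 1/ε₂)/(d₂ − ε₂) on (0, d₂) attains its minimum value [n/((√(2n+4) − 2)·d₂)]² at ε₂ = ((√(2n+4) − 2)/n)·d₂. -/
open Set Real

/-- For an integer `n ≥ 1` and `d₂ > 0`, the function
`ε₂ ↦ (n/(2d₂) + 1/ε₂)/(d₂ − ε₂)` on `(0, d₂)` attains its minimum value
`(n/((√(2n+4) − 2)·d₂))²` at `ε₂ = ((√(2n+4) − 2)/n)·d₂`. -/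
theorem eps2_optimization (n : ℕ) (hn : 1 ≤ n) (d₂ : ℝ) (hd₂ : 0 < d₂) :
    ((Real.sqrt (2 * n + 4) - 2) / n) * d₂ ∈ Ioo (0 : ℝ) d₂ ∧
    (((n : ℝ) / (2 * d₂) + 1 / (((Real.sqrt (2 * n + 4) - 2) / n) * d₂)) /
        (d₂ - ((Real.sqrt (2 * n + 4) - 2) / n) * d₂)
      = ((n : ℝ) / ((Real.sqrt (2 * n + 4) - 2) * d₂)) ^ 2) ∧
    ∀ ε₂ ∈ Ioo (0 : ℝ) d₂,
      ((n : ℝ) / ((Real.sqrt (2 * n + 4) - 2) * d₂)) ^ 2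
        ≤ ((n : ℝ) / (2 * d₂) + 1 / ε₂) / (d₂ - ε₂) := by
  have hn1 : (1 : ℝ) ≤ (n : ℝ) := by exact_mod_cast hn
  have hnpos : (0 : ℝ) < n := by linarith
  set s := Real.sqrt (2 * n + 4) with hs
  have hsnn : 0 ≤ s := Real.sqrt_nonneg _
  have hs2 : s ^ 2 = 2 * n + 4 := by
    rw [hs, Real.sq_sqrt]; positivity
  have hs_gt : 2 < s := by nlinarith [hs2, hsnn]
  have hs_lt : s < n + 2 := by nlinarith [hs2, hsnn]
  have hmem : ((s - 2) / n) * d₂ ∈ Ioo (0 : ℝ) d₂ := by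
    constructor
    · exact mul_pos (div_pos (by linarith) hnpos) hd₂
    · have h1 : (s - 2) / n < 1 := by
        rw [div_lt_one hnpos]; linarith
      nlinarith [h1, hd₂]
  refine ⟨hmem, ?_, ?_⟩
  · have h1 : s - 2 ≠ 0 := by linarith
    have h2 : (n : ℝ) ≠ 0 := ne_of_gt hnpos
    have h3 : d₂ ≠ 0 := ne_of_gt hd₂
    have h4 : d₂ - ((s - 2) / n) * d₂ ≠ 0 := by
      have := hmem.2; intro h; nlinarith [hmem.2]
    have h5 : d₂ * n - (s - 2) * d₂ ≠ 0 := by nlinarith [hs_lt, hd₂]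
    have h6 : (n : ℝ) - (s - 2) ≠ 0 := by linarith
    field_simp
    linear_combination hs2
  · intro ε hε
    obtain ⟨hε0, hεd⟩ := hε
    have hde : 0 < d₂ - ε := by linarith
    have hsd : 0 < ((s - 2) * d₂) ^ 2 :=
      pow_pos (mul_pos (by linarith : (0:ℝ) < s - 2) hd₂) 2
    rw [div_add_div _ _ (by positivity) (ne_of_gt hε0), div_div, div_pow,
      div_le_div_iff₀ hsd (by positivity)]
    have hkey : d₂ ^ 2 * n * ε * (s ^ 2 - (2 * n + 4)) = 0 := by rw [hs2]; ring
    nlinarith [mul_nonneg hd₂.le (sq_nonneg ((n : ℝ) * ε - (s - 2) * d₂)), hkey]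
end

section
/- Let n ≥ 1, d₁, d₂ > 0, α > 0, χ ∈ ℝ. Then the infimum over ε₁ ∈ (0,d₁), ε₂ ∈ (0,d₂), ε₃ > 0, ε₄ > 0 of the quantity χ²/(4ε₃) + 2(n/(2d₂) + 1/ε₂)α²·(ε₃+ε₄)/(2(d₂−ε₂)) + (χ²/(2ε₁))·((d₁+d₂)²/(4ε₄))/(2(d₁−ε₁)) equals (n/(√(2n+4) − 2))·(1/d₁ + 2/d₂)·α·|χ|. -/
open Set Real

set_option maxHeartbeats 1000000

/-- The infimum over admissible `ε₁, ε₂, ε₃, ε₄` of the quantity appearing in the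
blow-up prevention estimate equals `(n/(√(2n+4) − 2))·(1/d₁ + 2/d₂)·α·|χ|`. -/
theorem mu0_infimum (n : ℕ) (hn : 1 ≤ n) (d₁ d₂ α : ℝ) (hd₁ : 0 < d₁)
    (hd₂ : 0 < d₂) (hα : 0 < α) (χ : ℝ) :
    sInf {y : ℝ | ∃ ε₁ ∈ Ioo (0 : ℝ) d₁, ∃ ε₂ ∈ Ioo (0 : ℝ) d₂,
        ∃ ε₃ > (0 : ℝ), ∃ ε₄ > (0 : ℝ),
        y = χ ^ 2 / (4 * ε₃)
          + 2 * ((n : ℝ) / (2 * d₂) + 1 / ε₂) * α ^ 2 * (ε₃ + ε₄) / (2 * (d₂ - ε₂))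
          + (χ ^ 2 / (2 * ε₁)) * ((d₁ + d₂) ^ 2 / (4 * ε₄)) / (2 * (d₁ - ε₁))}
      = ((n : ℝ) / (Real.sqrt (2 * n + 4) - 2)) * (1 / d₁ + 2 / d₂) * α * |χ| := by
  have hn1 : (1:ℝ) ≤ (n:ℝ) := by exact_mod_cast hn
  set s := Real.sqrt (2 * n + 4) with hs_def
  have hs2 : s * s = 2 * n + 4 := Real.mul_self_sqrt (by positivity)
  have hs0 : 0 ≤ s := Real.sqrt_nonneg _
  have hs_gt : 2 < s := by nlinarith
  have hs_lt : s < (n:ℝ) + 2 := by nlinarith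
  have hfrac : (n:ℝ) / (s - 2) = (s + 2) / 2 := by
    rw [div_eq_div_iff (by linarith) (by norm_num)]; nlinarith
  set b := α * (s + 2) / (2 * d₂) with hb_def
  have hbpos : 0 < b := by
    apply div_pos (by nlinarith) (by linarith)
  set c := |χ| * (d₁ + d₂) / (2 * d₁) with hc_def
  have hcnn : 0 ≤ c := by positivity
  have hc2 : 4 * c ^ 2 * d₁ ^ 2 = χ ^ 2 * (d₁ + d₂) ^ 2 := by
    rw [hc_def]; rw [div_pow]; field_simp; rw [← sq_abs χ]; ring
  have hb2 : 4 * d₂ ^ 2 * b ^ 2 = α ^ 2 * (s + 2) ^ 2 := by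
    rw [hb_def]; field_simp; ring
  -- the claimed value
  have hm : ((n:ℝ) / (s - 2)) * (1 / d₁ + 2 / d₂) * α * |χ| = b * |χ| + 2 * b * c := by
    rw [hfrac, hb_def, hc_def]; field_simp; ring
  rw [hm]
  clear_value s b c
  -- lower bound
  have hlb : ∀ y ∈ {y : ℝ | ∃ ε₁ ∈ Ioo (0 : ℝ) d₁, ∃ ε₂ ∈ Ioo (0 : ℝ) d₂,
        ∃ ε₃ > (0 : ℝ), ∃ ε₄ > (0 : ℝ),
        y = χ ^ 2 / (4 * ε₃)
          + 2 * ((n : ℝ) / (2 * d₂) + 1 / ε₂) * α ^ 2 * (ε₃ + ε₄) / (2 * (d₂ - ε₂))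
          + (χ ^ 2 / (2 * ε₁)) * ((d₁ + d₂) ^ 2 / (4 * ε₄)) / (2 * (d₁ - ε₁))},
      b * |χ| + 2 * b * c ≤ y := by
    rintro y ⟨ε₁, ⟨h1a, h1b⟩, ε₂, ⟨h2a, h2b⟩, ε₃, h3, ε₄, h4, rfl⟩
    have hd1e : 0 < d₁ - ε₁ := by linarith
    have hd2e : 0 < d₂ - ε₂ := by linarith
    have hT1 : b * |χ| - b ^ 2 * ε₃ ≤ χ ^ 2 / (4 * ε₃) := by
      rw [le_div_iff₀ (by positivity)]
      nlinarith [sq_nonneg (|χ| - 2 * b * ε₃), sq_abs χ]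
    have hT2 : b ^ 2 * (ε₃ + ε₄) ≤
        2 * ((n : ℝ) / (2 * d₂) + 1 / ε₂) * α ^ 2 * (ε₃ + ε₄) / (2 * (d₂ - ε₂)) := by
      have heq : 2 * ((n : ℝ) / (2 * d₂) + 1 / ε₂) * α ^ 2 * (ε₃ + ε₄) / (2 * (d₂ - ε₂))
          = ((n:ℝ) * ε₂ + 2 * d₂) * α ^ 2 * (ε₃ + ε₄) / (2 * d₂ * ε₂ * (d₂ - ε₂)) := by
        field_simp
      rw [heq, le_div_iff₀ (by positivity)]
      have hident : 2 * d₂ * (((n:ℝ) * ε₂ + 2 * d₂) * α ^ 2 * (ε₃ + ε₄))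
          - 2 * d₂ * (b ^ 2 * (ε₃ + ε₄) * (2 * d₂ * ε₂ * (d₂ - ε₂)))
          = (ε₃ + ε₄) * (α ^ 2 * (2 * d₂ - (s + 2) * ε₂) ^ 2) := by
        linear_combination (-(ε₃ + ε₄) * ε₂ * (d₂ - ε₂)) * hb2
          + (-(ε₃ + ε₄) * α ^ 2 * d₂ * ε₂) * hs2
      have key : 0 ≤ (ε₃ + ε₄) * (α ^ 2 * (2 * d₂ - (s + 2) * ε₂) ^ 2) := by positivity
      nlinarith [hident, key, hd₂]
    have hT3 : 2 * b * c - b ^ 2 * ε₄ ≤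
        (χ ^ 2 / (2 * ε₁)) * ((d₁ + d₂) ^ 2 / (4 * ε₄)) / (2 * (d₁ - ε₁)) := by
      have heq : (χ ^ 2 / (2 * ε₁)) * ((d₁ + d₂) ^ 2 / (4 * ε₄)) / (2 * (d₁ - ε₁))
          = χ ^ 2 * (d₁ + d₂) ^ 2 / (16 * ε₁ * ε₄ * (d₁ - ε₁)) := by
        rw [div_mul_div_comm, div_div]; congr 1; ring
      rw [heq, le_div_iff₀ (by positivity)]
      have k1 : 0 ≤ (2 * ε₁ - d₁) ^ 2 * c ^ 2 := by positivity
      have k2 : 0 ≤ (ε₁ * (d₁ - ε₁)) * (c - b * ε₄) ^ 2 :=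
        mul_nonneg (by positivity) (sq_nonneg _)
      nlinarith [k1, k2, hc2]
    linarith
  apply le_antisymm
  · -- sInf ≤ value
    rcases eq_or_ne χ 0 with hχ | hχ
    · -- χ = 0 : value = 0, and elements get arbitrarily small
      have hc0 : c = 0 := by rw [hc_def, hχ]; simp
      have hzero : b * |χ| + 2 * b * c = 0 := by rw [hχ, hc0]; simp
      rw [hzero]
      apply le_of_forall_pos_le_add
      intro δ hδ
      set K : ℝ := 2 * ((n : ℝ) / (2 * d₂) + 1 / (d₂ / 2)) * α ^ 2 * 2 / (2 * (d₂ - d₂ / 2))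
        with hK_def
      have hKpos : 0 < K := by
        apply div_pos
        · have : 0 < (n : ℝ) / (2 * d₂) + 1 / (d₂ / 2) := by positivity
          positivity
        · nlinarith
      set t : ℝ := δ / K with ht_def
      have htpos : 0 < t := div_pos hδ hKpos
      have hmem : K * t ∈ {y : ℝ | ∃ ε₁ ∈ Ioo (0 : ℝ) d₁, ∃ ε₂ ∈ Ioo (0 : ℝ) d₂,
        ∃ ε₃ > (0 : ℝ), ∃ ε₄ > (0 : ℝ),
        y = χ ^ 2 / (4 * ε₃)
          + 2 * ((n : ℝ) / (2 * d₂) + 1 / ε₂) * α ^ 2 * (ε₃ + ε₄) / (2 * (d₂ - ε₂))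
          + (χ ^ 2 / (2 * ε₁)) * ((d₁ + d₂) ^ 2 / (4 * ε₄)) / (2 * (d₁ - ε₁))} := by
        refine ⟨d₁ / 2, ⟨by linarith, by linarith⟩, d₂ / 2, ⟨by linarith, by linarith⟩,
          t, by positivity, t, by positivity, ?_⟩
        rw [hχ, hK_def]
        have h1 : (0:ℝ) ^ 2 / (4 * t) = 0 := by simp
        have h2 : ((0:ℝ) ^ 2 / (2 * (d₁ / 2))) * ((d₁ + d₂) ^ 2 / (4 * t))
            / (2 * (d₁ - d₁ / 2)) = 0 := by simp
        rw [h1, h2]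
        have hne1 : (0:ℝ) < (n : ℝ) / (2 * d₂) + 1 / (d₂ / 2) := by positivity
        field_simp
        ring
      have h1 : sInf {y : ℝ | ∃ ε₁ ∈ Ioo (0 : ℝ) d₁, ∃ ε₂ ∈ Ioo (0 : ℝ) d₂,
        ∃ ε₃ > (0 : ℝ), ∃ ε₄ > (0 : ℝ),
        y = χ ^ 2 / (4 * ε₃)
          + 2 * ((n : ℝ) / (2 * d₂) + 1 / ε₂) * α ^ 2 * (ε₃ + ε₄) / (2 * (d₂ - ε₂))
          + (χ ^ 2 / (2 * ε₁)) * ((d₁ + d₂) ^ 2 / (4 * ε₄)) / (2 * (d₁ - ε₁))} ≤ K * t :=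
        csInf_le ⟨b * |χ| + 2 * b * c, hlb⟩ hmem
      have h2 : K * t = δ := by
        rw [ht_def]; field_simp
      linarith
    · -- χ ≠ 0 : minimum attained
      have hχabs : 0 < |χ| := abs_pos.mpr hχ
      have hcpos : 0 < c := by
        rw [hc_def]; positivity
      apply csInf_le ⟨b * |χ| + 2 * b * c, hlb⟩
      refine ⟨d₁ / 2, ⟨by linarith, by linarith⟩, d₂ * (s - 2) / n, ⟨?_, ?_⟩,
        |χ| / (2 * b), by positivity, c / b, by positivity, ?_⟩
      · have hnn : (0:ℝ) < (n:ℝ) := by linarith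
        apply div_pos (by nlinarith) hnn
      · rw [div_lt_iff₀ (by linarith : (0:ℝ) < (n:ℝ))]
        nlinarith
      · -- the equality at the optimum
        rw [hb_def, hc_def]
        have hn_eq : (n:ℝ) = (s * s - 4) / 2 := by linarith
        have hχ2 : χ ^ 2 = |χ| ^ 2 := (sq_abs χ).symm
        have h1 : s - 2 ≠ 0 := by linarith
        have h2 : s + 2 ≠ 0 := by linarith
        have h3 : (s * s - 4) ≠ 0 := by nlinarith
        have h4 : |χ| ≠ 0 := ne_of_gt hχabs
        have h5 : (0:ℝ) < d₁ + d₂ := by linarith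
        have hs0' : (0:ℝ) < s := by linarith
        have e1 : χ ^ 2 / (4 * (|χ| / (2 * (α * (s + 2) / (2 * d₂)))))
            = (α * (s + 2) / (2 * d₂)) * |χ| / 2 := by
          rw [div_eq_div_iff (by positivity) (by norm_num)]
          field_simp
          linear_combination 4 * hχ2
        have hA : (n : ℝ) / (2 * d₂) + 1 / (d₂ * (s - 2) / n) = s * (s + 2) / (4 * d₂) := by
          rw [hn_eq]; field_simp; ring
        have hD : d₂ - d₂ * (s - 2) / n = d₂ * s / (s + 2) := by
          have hq : d₂ * (s - 2) / ((s * s - 4) / 2) = 2 * d₂ / (s + 2) := by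
            rw [div_eq_div_iff (div_ne_zero h3 two_ne_zero) h2]; ring
          rw [hn_eq, hq, eq_div_iff h2, sub_mul, div_mul_cancel₀ _ h2]; ring
        have e2 : 2 * ((n : ℝ) / (2 * d₂) + 1 / (d₂ * (s - 2) / n)) * α ^ 2
                    * (|χ| / (2 * (α * (s + 2) / (2 * d₂)))
                        + (|χ| * (d₁ + d₂) / (2 * d₁)) / (α * (s + 2) / (2 * d₂)))
                    / (2 * (d₂ - d₂ * (s - 2) / n))
            = (α * (s + 2) / (2 * d₂)) * |χ| / 2
              + (α * (s + 2) / (2 * d₂)) * (|χ| * (d₁ + d₂) / (2 * d₁)) := by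
          rw [hA, hD, div_eq_iff (by positivity)]
          field_simp; ring
        have e3 : (χ ^ 2 / (2 * (d₁ / 2)))
                    * ((d₁ + d₂) ^ 2
                        / (4 * ((|χ| * (d₁ + d₂) / (2 * d₁)) / (α * (s + 2) / (2 * d₂)))))
                    / (2 * (d₁ - d₁ / 2))
            = (α * (s + 2) / (2 * d₂)) * (|χ| * (d₁ + d₂) / (2 * d₁)) := by
          rw [show (2 * (d₁ - d₁ / 2)) = d₁ from by ring, div_eq_iff (ne_of_gt hd₁)]
          field_simp
          linear_combination 4 * hχ2
        rw [e1, e2, e3]; ring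
  · exact le_csInf ⟨χ ^ 2 / (4 * 1)
          + 2 * ((n : ℝ) / (2 * d₂) + 1 / (d₂/2)) * α ^ 2 * (1 + 1) / (2 * (d₂ - d₂/2))
          + (χ ^ 2 / (2 * (d₁/2))) * ((d₁ + d₂) ^ 2 / (4 * 1)) / (2 * (d₁ - d₁/2)),
        ⟨d₁/2, ⟨by linarith, by linarith⟩, d₂/2, ⟨by linarith, by linarith⟩,
          1, by norm_num, 1, by norm_num, rfl⟩⟩ hlb
end
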